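/- The coupling matrix J with entries J_{jl} = exp(i·|j−l|·θ) is singular if and only if θ = nπ for some integer n (assuming N ≥ 2). -/

import Mathlib

open Complex

/-- The coupling matrix `J j l = exp(i |j - l| θ)`. -/
noncomputable def couplingMatrix (N : ℕ) (θ : ℝ) : Matrix (Fin N) (Fin N) ℂ :=
  fun j l => Complex.exp (Complex.I * (((j : ℤ) - (l : ℤ)).natAbs : ℂ) * (θ : ℂ))

lemma couplingMatrix_eq_pow (N : ℕ) (θ : ℝ) (j l : Fin N) :
    couplingMatrix N θ j l = Complex.exp (Complex.I * θ) ^ (((j : ℤ) - (l : ℤ)).natAbs) := by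
  rw [couplingMatrix, ← Complex.exp_nat_mul]
  ring_nf

/-- The coupling matrix is singular iff `θ = n π` for some integer `n`. -/
theorem couplingMatrix_singular_iff (N : ℕ) (hN : 2 ≤ N) (θ : ℝ) :
    (couplingMatrix N θ).det = 0 ↔ ∃ n : ℤ, θ = n * Real.pi := by
  set ω : ℂ := Complex.exp (Complex.I * θ) with hω
  set J := couplingMatrix N θ with hJ
  -- subdiagonal shift matrix
  set S : Matrix (Fin N) (Fin N) ℂ := fun j l => if (l : ℕ) + 1 = (j : ℕ) then 1 else 0 with hS
  set A : Matrix (Fin N) (Fin N) ℂ := 1 - ω • S with hA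
  set B : Matrix (Fin N) (Fin N) ℂ := fun j l =>
    if (j : ℕ) = 0 then ω ^ (l : ℕ)
    else if (j : ℕ) ≤ (l : ℕ) then ω ^ ((l : ℕ) - (j : ℕ)) * (1 - ω ^ 2) else 0 with hB
  have hmul : A * J = B := by
    ext j l
    rw [hA, Matrix.sub_mul, Matrix.one_mul, Matrix.smul_mul]
    simp only [Matrix.sub_apply, Matrix.smul_apply, Matrix.mul_apply, smul_eq_mul]
    rcases Nat.eq_zero_or_pos (j : ℕ) with hj0 | hjpos
    · have hsum : (∑ k : Fin N, S j k * J k l) = 0 := by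
        apply Finset.sum_eq_zero
        intro k _
        have : ¬ ((k : ℕ) + 1 = (j : ℕ)) := by omega
        simp [hS, this]
      rw [hsum, hJ, couplingMatrix_eq_pow]
      have : ((j : ℤ) - (l : ℤ)).natAbs = (l : ℕ) := by omega
      simp [hB, hj0, this, ← hω]
    · obtain ⟨m, hm⟩ : ∃ m : ℕ, (j : ℕ) = m + 1 := ⟨(j : ℕ) - 1, by omega⟩
      have hmlt : m < N := by omega
      have hsum : (∑ k : Fin N, S j k * J k l) = J ⟨m, hmlt⟩ l := by
        rw [Finset.sum_eq_single (⟨m, hmlt⟩ : Fin N)]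
        · simp [hS, hm]
        · intro k _ hk
          have : ¬ ((k : ℕ) + 1 = (j : ℕ)) := by
            intro h
            apply hk
            apply Fin.ext
            simp only []
            omega
          simp [hS, this]
        · simp
      simp only [hJ] at hsum ⊢
      rw [hsum, couplingMatrix_eq_pow, couplingMatrix_eq_pow, ← hω]
      rcases le_or_gt (j : ℕ) (l : ℕ) with hle | hlt
      · have h1 : ((j : ℤ) - (l : ℤ)).natAbs = (l : ℕ) - (j : ℕ) := by omega
        have hcast : ((⟨m, hmlt⟩ : Fin N) : ℤ) = (m : ℤ) := by simp
        have h2 : (((⟨m, hmlt⟩ : Fin N) : ℤ) - (l : ℤ)).natAbs = ((l : ℕ) - (j : ℕ)) + 1 := by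
          rw [hcast]; omega
        rw [h1, h2]
        have hj0' : (j : ℕ) ≠ 0 := by omega
        simp only [hB, hj0', if_false, hle, if_true]
        ring
      · have h1 : ((j : ℤ) - (l : ℤ)).natAbs = ((j : ℕ) - (l : ℕ)) := by omega
        have hcast : ((⟨m, hmlt⟩ : Fin N) : ℤ) = (m : ℤ) := by simp
        have h2 : (((⟨m, hmlt⟩ : Fin N) : ℤ) - (l : ℤ)).natAbs = (j : ℕ) - (l : ℕ) - 1 := by
          rw [hcast]; omega
        rw [h1, h2]
        have hj0' : (j : ℕ) ≠ 0 := by omega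
        have hnle : ¬ ((j : ℕ) ≤ (l : ℕ)) := by omega
        simp only [hB, hj0', if_false, hnle]
        set d : ℕ := (j : ℕ) - (l : ℕ) - 1 with hd
        have hjl : (j : ℕ) - (l : ℕ) = d + 1 := by omega
        rw [hjl, pow_succ]
        ring
  have hdetA : A.det = 1 := by
    have htri : A.BlockTriangular OrderDual.toDual := by
      intro j l h
      have hlt : j < l := h
      have h1 : j ≠ l := Fin.ne_of_lt hlt
      have h2 : ¬ ((l : ℕ) + 1 = (j : ℕ)) := by
        have := Fin.lt_iff_val_lt_val.mp hlt
        omega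
      rw [hA, Matrix.sub_apply, Matrix.smul_apply]
      simp [hA, hS, Matrix.one_apply, h1, h2]
    rw [Matrix.det_of_lowerTriangular A htri]
    apply Finset.prod_eq_one
    intro j _
    have h2 : ¬ ((j : ℕ) + 1 = (j : ℕ)) := by omega
    rw [hA, Matrix.sub_apply, Matrix.smul_apply]
    simp [hA, hS, Matrix.one_apply, h2]
  have hdetB : B.det = ∏ j : Fin N, B j j := by
    apply Matrix.det_of_upperTriangular
    intro j l h
    simp only [id] at h
    have h1 : (j : ℕ) ≠ 0 := by
      have := Fin.lt_iff_val_lt_val.mp h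
      omega
    have h2 : ¬ ((j : ℕ) ≤ (l : ℕ)) := by
      have := Fin.lt_iff_val_lt_val.mp h
      omega
    simp only [hB]
    rw [if_neg h1, if_neg h2]
  have hdetJ : J.det = ∏ j : Fin N, B j j := by
    have := congrArg Matrix.det hmul
    rwa [Matrix.det_mul, hdetA, one_mul, hdetB] at this
  have hBdiag : ∀ j : Fin N, B j j = if (j : ℕ) = 0 then 1 else (1 - ω ^ 2) := by
    intro j
    rcases Nat.eq_zero_or_pos (j : ℕ) with h | h
    · simp [hB, h]
    · have h' : (j : ℕ) ≠ 0 := by omega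
      simp [hB, h']
  have key : J.det = 0 ↔ ω ^ 2 = 1 := by
    rw [hdetJ, Finset.prod_eq_zero_iff]
    constructor
    · rintro ⟨j, -, hj⟩
      rw [hBdiag] at hj
      by_cases h : (j : ℕ) = 0
      · simp [h] at hj
      · simp [h] at hj
        linear_combination -hj
    · intro h
      refine ⟨⟨1, by omega⟩, Finset.mem_univ _, ?_⟩
      rw [hBdiag]
      simp [h]
  rw [key]
  have hω2 : ω ^ 2 = Complex.exp (2 * (Complex.I * θ)) := by
    rw [hω, ← Complex.exp_nat_mul]
    norm_num
  rw [hω2, show (1 : ℂ) = Complex.exp 0 by simp, Complex.exp_eq_exp_iff_exists_int]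
  constructor
  · rintro ⟨n, hn⟩
    refine ⟨n, ?_⟩
    have h2 : Complex.I * (2 * θ) = Complex.I * (2 * n * Real.pi) := by
      linear_combination hn
    have h3 := mul_left_cancel₀ Complex.I_ne_zero h2
    have : (θ : ℂ) = (n : ℂ) * Real.pi := by linear_combination h3 / 2
    exact_mod_cast this
  · rintro ⟨n, hn⟩
    refine ⟨n, ?_⟩
    rw [hn]
    push_cast
    ring
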